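/- Let N = k·2^n + 1 with k odd, k < 2^n, n ≥ 2, and suppose a is an integer with a^((N-1)/2) ≡ -1 (mod N). Then the multiplicative order of a modulo any prime divisor p of N is divisible by 2^n. -/

import Mathlib

/-- Key step in Proth's theorem: if `N = k·2^n + 1` with `k` odd, `k < 2^n`, `n ≥ 2`,
and `a^((N-1)/2) ≡ -1 (mod N)`, then for every prime `p ∣ N` the multiplicative order
of `a` mod `p` is divisible by `2^n`. -/
theorem proth_order_div (k n N : ℕ) (hk : Odd k) (hkn : k < 2 ^ n) (hn : 2 ≤ n)
    (hN : N = k * 2 ^ n + 1) (a : ℤ)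
    (ha : (a : ZMod N) ^ ((N - 1) / 2) = -1) :
    ∀ p : ℕ, p.Prime → p ∣ N → 2 ^ n ∣ orderOf (a : ZMod p) := by
  intro p pp hpN
  haveI : Fact p.Prime := ⟨pp⟩
  have hk0 : 0 < k := hk.pos
  have hNsub : N - 1 = k * 2 ^ n := by omega
  have hhalf : (N - 1) / 2 = k * 2 ^ (n - 1) := by
    rw [hNsub]
    have : 2 ^ n = 2 ^ (n - 1) * 2 := by
      rw [← pow_succ]; congr 1; omega
    rw [this, ← mul_assoc, Nat.mul_div_cancel _ (by norm_num)]
  -- push the hypothesis to ZMod p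
  have hap : (a : ZMod p) ^ ((N - 1) / 2) = -1 := by
    have h := congrArg (ZMod.castHom hpN (ZMod p)) ha
    rw [map_pow, map_neg, map_one, ZMod.castHom_apply, ZMod.cast_intCast hpN] at h
    exact h
  have podd : p ≠ 2 := by
    have heven : 2 ∣ k * 2 ^ n := Dvd.dvd.mul_left (dvd_pow_self 2 (by omega)) k
    rintro rfl
    obtain ⟨c, hc⟩ := heven
    obtain ⟨d, hd⟩ := hpN
    omega
  haveI : Fact (2 < p) := ⟨by have := pp.two_le; omega⟩
  have hne : (-1 : ZMod p) ≠ 1 := ZMod.neg_one_ne_one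
  have hpow1 : (a : ZMod p) ^ (N - 1) = 1 := by
    have hstep : N - 1 = (N - 1) / 2 * 2 := by
      rw [hhalf, hNsub, mul_assoc, ← pow_succ]
      congr 2
      omega
    rw [hstep, pow_mul, hap]; ring
  set d := orderOf (a : ZMod p) with hd
  have hdvd : d ∣ k * 2 ^ n := by rw [← hNsub]; exact orderOf_dvd_of_pow_eq_one hpow1
  have hndvd : ¬ d ∣ k * 2 ^ (n - 1) := by
    intro h
    have : (a : ZMod p) ^ (k * 2 ^ (n - 1)) = 1 := orderOf_dvd_iff_pow_eq_one.mp h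
    rw [← hhalf, hap] at this
    exact hne this
  -- now 2^n ∣ d
  have hd0 : d ≠ 0 := by
    intro h
    rw [h] at hdvd
    have h0 := Nat.eq_zero_of_zero_dvd hdvd
    have : 0 < k * 2 ^ n := by positivity
    omega
  set v := d.factorization 2 with hv
  have hm : 2 ^ v * (d / 2 ^ v) = d := Nat.ordProj_mul_ordCompl_eq_self d 2
  have hmodd : ¬ 2 ∣ (d / 2 ^ v) := Nat.not_dvd_ordCompl (by norm_num) hd0
  have hmdvd : (d / 2 ^ v) ∣ k * 2 ^ n := dvd_trans (Nat.ordCompl_dvd d 2) hdvd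
  have hcop : Nat.Coprime (d / 2 ^ v) (2 ^ n) :=
    (Nat.coprime_two_right.mpr (Nat.odd_iff.mpr (Nat.two_dvd_ne_zero.mp hmodd))).pow_right n
  have hmk : (d / 2 ^ v) ∣ k := (Nat.Coprime.dvd_of_dvd_mul_right hcop hmdvd)
  have hvn : n ≤ v := by
    by_contra hlt
    push_neg at hlt
    have h1 : 2 ^ v ∣ 2 ^ (n - 1) := pow_dvd_pow 2 (by omega)
    have h2 : d ∣ 2 ^ (n - 1) * k := hm ▸ mul_dvd_mul h1 hmk
    exact hndvd (by rwa [mul_comm] at h2)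
  calc 2 ^ n ∣ 2 ^ v := pow_dvd_pow 2 hvn
    _ ∣ d := Nat.ordProj_dvd d 2
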